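/- Fix n ≥ 2, positive weights w_1,…,w_n with ℓ := Σ_{i=1}^n w_i, and β > 0. Let G be a random graph on vertex set [n] in which each pair {i,j} with i ≠ j is an edge independently (over distinct pairs) with some probability q_{ij} satisfying q_{ij} ≤ β w_i w_j / ℓ. Set ν := (Σ_{k=1}^n w_k²)/ℓ. Then for every nonempty A ⊆ [n], every j ∈ [n] \ A, and every integer l ≥ 1: P( dist_G(A, j) = l ) ≤ β ( Σ_{a∈A} w_a ) (w_j/ℓ) (β ν)^{l−1}, where dist_G(A, j) := min_{a∈A} d_G(a, j) with d_G the graph distance in G (taken to be ∞ if j is not connected to any vertex of A). -/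

import Mathlib

open MeasureTheory ProbabilityTheory

/-- The simple graph on `Fin n` determined by a configuration of edge indicators indexed by
unordered pairs. -/
def graphOfConfig {n : ℕ} (ω : Sym2 (Fin n) → Bool) : SimpleGraph (Fin n) where
  Adj i j := i ≠ j ∧ ω s(i, j) = true
  symm := by
    constructor
    intro i j h
    exact ⟨h.1.symm, by rw [Sym2.eq_swap]; exact h.2⟩
  loopless := by constructor; intro i h; exact h.1 rfl

namespace Stmt12Aux
open Finset

lemma getVert_injOn {V : Type*} {G : SimpleGraph V} {u v : V} (p : G.Walk u v)
    (hp : p.support.Nodup) :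
    ∀ i ≤ p.length, ∀ k ≤ p.length, p.getVert i = p.getVert k → i = k := by
  induction p with
  | nil => intro i hi k hk _; simp only [SimpleGraph.Walk.length_nil, Nat.le_zero] at hi hk; omega
  | @cons a b c h q ih =>
    rw [SimpleGraph.Walk.support_cons, List.nodup_cons] at hp
    intro i hi k hk heq
    match i, k with
    | 0, 0 => rfl
    | 0, k+1 =>
      exfalso; apply hp.1
      rw [SimpleGraph.Walk.mem_support_iff_exists_getVert]
      refine ⟨k, ?_, by simpa using hk⟩
      simpa [SimpleGraph.Walk.getVert_cons_succ] using heq.symm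
    | i+1, 0 =>
      exfalso; apply hp.1
      rw [SimpleGraph.Walk.mem_support_iff_exists_getVert]
      refine ⟨i, ?_, by simpa using hi⟩
      simpa [SimpleGraph.Walk.getVert_cons_succ] using heq
    | i+1, k+1 =>
      have := ih hp.2 i (by simpa using hi) k (by simpa using hk)
        (by simpa [SimpleGraph.Walk.getVert_cons_succ] using heq)
      omega

variable {α : Type*} [Fintype α] [DecidableEq α]

/-- Walks of length `l` from `a` to `j` encoded as functions. -/
def VF (c : α → α → ℝ) (l : ℕ) (a j : α) : Finset (Fin (l+1) → α) :=
  Finset.univ.filter (fun v => v 0 = a ∧ v (Fin.last l) = j)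

noncomputable def gsum (c : α → α → ℝ) (l : ℕ) (a j : α) : ℝ :=
  ∑ v ∈ VF c l a j, ∏ i : Fin l, c (v i.castSucc) (v i.succ)

lemma gsum_zero (c : α → α → ℝ) (a j : α) : gsum c 0 a j = if a = j then 1 else 0 := by
  unfold gsum VF
  rcases eq_or_ne a j with rfl | hne
  · rw [if_pos rfl]
    have : (Finset.univ.filter (fun v : Fin 1 → α => v 0 = a ∧ v (Fin.last 0) = a))
        = {fun _ => a} := by
      ext v
      simp only [mem_filter, mem_univ, true_and, Finset.mem_singleton]
      constructor
      · rintro ⟨h1, -⟩; funext i; fin_cases i; exact h1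
      · rintro rfl; exact ⟨rfl, rfl⟩
    rw [this]; simp
  · rw [if_neg hne]
    have : (Finset.univ.filter (fun v : Fin 1 → α => v 0 = a ∧ v (Fin.last 0) = j))
        = ∅ := by
      ext v
      simp only [mem_filter, mem_univ, true_and, Finset.notMem_empty, iff_false, not_and]
      intro h1 h2
      exact hne (h1 ▸ h2 ▸ rfl)
    rw [this]; simp

lemma gsum_succ (c : α → α → ℝ) (l : ℕ) (a j : α) :
    gsum c (l+1) a j = ∑ b, c a b * gsum c l b j := by
  unfold gsum VF
  have hrhs : ∀ b : α, c a b * ∑ v ∈ Finset.univ.filter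
        (fun v : Fin (l+1) → α => v 0 = b ∧ v (Fin.last l) = j),
        ∏ i : Fin l, c (v i.castSucc) (v i.succ)
      = ∑ v ∈ (Finset.univ.filter (fun v : Fin (l+1) → α => v (Fin.last l) = j)).filter
          (fun v => v 0 = b),
        c a (v 0) * ∏ i : Fin l, c (v i.castSucc) (v i.succ) := by
    intro b
    rw [Finset.mul_sum, Finset.filter_filter]
    refine Finset.sum_congr ?_ (fun v hv => ?_)
    · apply Finset.filter_congr; intro v _; simp only [and_comm]
    · simp only [mem_filter] at hv
      rw [hv.2.2]
  rw [Finset.sum_congr rfl (fun b _ => hrhs b)]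
  rw [Finset.sum_fiberwise_of_maps_to (fun v _ => Finset.mem_univ (v 0))]
  -- now: ∑ v ∈ filter (v last = j), c a (v 0) * ∏ ... = ∑ v ∈ filter (v 0 = a ∧ v last = j), ∏ ...
  symm
  refine Finset.sum_nbij' (fun u => Fin.cons (α := fun _ => α) a u) (fun v => v ∘ Fin.succ)
    ?_ ?_ ?_ ?_ ?_
  · intro u hu
    simp only [mem_filter, mem_univ, true_and] at hu ⊢
    refine ⟨Fin.cons_zero _ _, ?_⟩
    rw [← Fin.succ_last, Fin.cons_succ]
    exact hu
  · intro v hv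
    simp only [mem_filter, mem_univ, true_and] at hv ⊢
    show v (Fin.last l).succ = j
    rw [Fin.succ_last]
    exact hv.2
  · intro u _
    funext i
    simp only [Function.comp_apply, Fin.cons_succ]
  · intro v hv
    simp only [mem_filter, mem_univ, true_and] at hv
    funext i
    induction i using Fin.cases with
    | zero => simp only [Fin.cons_zero, hv.1]
    | succ i => simp only [Fin.cons_succ, Function.comp_apply]
  · intro u hu
    simp only [mem_filter, mem_univ, true_and] at hu
    simp only [Fin.prod_univ_succ, Fin.castSucc_zero, Fin.cons_zero, Fin.cons_succ,
      ← Fin.succ_castSucc]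

lemma gsum_one (c : α → α → ℝ) (a j : α) : gsum c 1 a j = c a j := by
  rw [gsum_succ]
  simp [gsum_zero, mul_ite]

lemma gsum_closed {n : ℕ} (w : Fin n → ℝ) (β : ℝ) (hL : (∑ k, w k) ≠ 0) :
    ∀ l, 1 ≤ l → ∀ a j : Fin n,
      gsum (fun a b => β * w a * w b / ∑ k, w k) l a j
        = β * w a * (w j / ∑ k, w k) * (β * ((∑ k, (w k) ^ 2) / ∑ k, w k)) ^ (l - 1) := by
  intro l hl
  induction l, hl using Nat.le_induction with
  | base =>
    intro a j
    rw [gsum_one]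
    simp only [Nat.sub_self, pow_zero, mul_one]
    field_simp
  | succ l hl ih =>
    intro a j
    rw [gsum_succ]
    have hterm : ∀ b : Fin n,
        (fun a b => β * w a * w b / ∑ k, w k) a b *
          gsum (fun a b => β * w a * w b / ∑ k, w k) l b j
        = w b ^ 2 * (β * w a * (β * w j) * (β * ((∑ k, (w k) ^ 2) / ∑ k, w k)) ^ (l - 1)
            / ((∑ k, w k) * (∑ k, w k))) := by
      intro b
      rw [ih b j]
      field_simp
    rw [Finset.sum_congr rfl (fun b _ => hterm b), ← Finset.sum_mul]
    have hpow : (β * ((∑ k, (w k) ^ 2) / ∑ k, w k)) ^ (l + 1 - 1)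
        = (β * ((∑ k, (w k) ^ 2) / ∑ k, w k)) ^ (l - 1)
          * (β * ((∑ k, (w k) ^ 2) / ∑ k, w k)) := by
      rw [Nat.add_sub_cancel]
      conv_lhs => rw [← Nat.sub_add_cancel hl]
      rw [pow_succ]
    rw [hpow]
    field_simp



end Stmt12Aux

open Stmt12Aux in
/-- Let `G` be a random graph on `[n]` with independent edges, where the edge
`{i,j}` is present with probability `q_{ij} ≤ β w_i w_j / ℓ`, `ℓ = Σ w_i`.  With
`ν = (Σ w_k²)/ℓ`, for every nonempty `A ⊆ [n]`, `j ∉ A` and `l ≥ 1`: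
`P(dist_G(A,j) = l) ≤ β (Σ_{a∈A} w_a) (w_j/ℓ) (βν)^{l−1}`, where `dist_G(A,j)` is the minimal
graph distance from `A` to `j` (as an extended natural number, `∞` if unreachable). -/
theorem stmt12 (n : ℕ) (hn : 2 ≤ n) (w : Fin n → ℝ) (hw : ∀ i, 0 < w i) (β : ℝ) (hβ : 0 < β)
    {Ω : Type*} [MeasurableSpace Ω] (μ : Measure Ω) [IsProbabilityMeasure μ]
    (X : Sym2 (Fin n) → Ω → Bool) (hmeas : ∀ e, Measurable (X e))
    (hindep : iIndepFun
      (fun e : {e : Sym2 (Fin n) // ¬ e.IsDiag} => X e.1) μ)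
    (hq : ∀ i j : Fin n, i ≠ j →
      μ {ω | X s(i, j) ω = true} ≤ ENNReal.ofReal (β * w i * w j / ∑ k, w k)) :
    ∀ A : Finset (Fin n), A.Nonempty → ∀ j : Fin n, j ∉ A → ∀ l : ℕ, 1 ≤ l →
      μ {ω | (⨅ a ∈ A, (graphOfConfig (fun e => X e ω)).edist a j) = (l : ℕ∞)}
        ≤ ENNReal.ofReal (β * (∑ a ∈ A, w a) * (w j / ∑ k, w k) *
            (β * ((∑ k, (w k) ^ 2) / ∑ k, w k)) ^ (l - 1)) := by
  intro A hA j hjA l hl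
  classical
  have hL : (0:ℝ) < ∑ k, w k := Finset.sum_pos (fun i _ => hw i) ⟨j, Finset.mem_univ j⟩
  set c : Fin n → Fin n → ℝ := fun a b => β * w a * w b / ∑ k, w k with hc
  have hcnn : ∀ a b, 0 ≤ c a b := fun a b =>
    div_nonneg (mul_nonneg (mul_nonneg hβ.le (hw a).le) (hw b).le) hL.le
  set Vinj : Finset (Fin (l+1) → Fin n) :=
    Finset.univ.filter (fun v => (v 0 ∈ A ∧ v (Fin.last l) = j) ∧ Function.Injective v)
    with hVinj
  set E : (Fin (l+1) → Fin n) → Set Ω := fun v =>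
    ⋂ i : Fin l, {ω | X s(v i.castSucc, v i.succ) ω = true} with hE
  -- Step 1: the event is contained in the union of path events
  have hsub : {ω | (⨅ a ∈ A, (graphOfConfig (fun e => X e ω)).edist a j) = (l : ℕ∞)}
      ⊆ ⋃ v ∈ Vinj, E v := by
    intro ω hω
    simp only [Set.mem_setOf_eq] at hω
    set G := graphOfConfig (fun e => X e ω) with hG
    obtain ⟨a, haA, hainf⟩ := Finset.exists_mem_eq_inf A hA (fun a => G.edist a j)
    have hinfl : A.inf (fun a => G.edist a j) = (l : ℕ∞) := by
      rw [Finset.inf_eq_iInf]; exact hω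
    rw [hinfl] at hainf
    obtain ⟨p, hp⟩ := SimpleGraph.exists_walk_of_edist_eq_coe hainf.symm
    have hble : p.bypass.length ≤ l := hp ▸ SimpleGraph.Walk.length_bypass_le p
    have hbge : l ≤ p.bypass.length := by
      have h1 := SimpleGraph.Walk.edist_le p.bypass
      rw [← hainf] at h1
      exact_mod_cast h1
    have hbl : p.bypass.length = l := le_antisymm hble hbge
    have hpath := SimpleGraph.Walk.bypass_isPath p
    refine Set.mem_iUnion₂.mpr ⟨fun i => p.bypass.getVert i, ?_, ?_⟩
    · simp only [hVinj, Finset.mem_filter, Finset.mem_univ, true_and]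
      refine ⟨⟨?_, ?_⟩, ?_⟩
      · simpa [SimpleGraph.Walk.getVert_zero] using haA
      · show p.bypass.getVert ((Fin.last l : Fin (l+1)) : ℕ) = j
        rw [Fin.val_last, ← hbl, SimpleGraph.Walk.getVert_length]
      · intro i k hik
        refine Fin.ext ?_
        exact getVert_injOn p.bypass hpath.support_nodup i
          (by rw [hbl]; exact Fin.is_le i) k (by rw [hbl]; exact Fin.is_le k) hik
    · refine Set.mem_iInter.mpr (fun i => ?_)
      have hadj := p.bypass.adj_getVert_succ (i := (i : ℕ)) (by rw [hbl]; exact i.isLt)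
      show X s((fun i : Fin (l+1) => p.bypass.getVert i) i.castSucc,
        (fun i : Fin (l+1) => p.bypass.getVert i) i.succ) ω = true
      simp only [Fin.coe_castSucc, Fin.val_succ]
      exact hadj.2
  -- Step 2: bound the measure of each path event
  have hEv : ∀ v ∈ Vinj, μ (E v)
      ≤ ENNReal.ofReal (∏ i : Fin l, c (v i.castSucc) (v i.succ)) := by
    intro v hv
    simp only [hVinj, Finset.mem_filter, Finset.mem_univ, true_and] at hv
    obtain ⟨-, hvinj⟩ := hv
    have hne : ∀ i : Fin l, v i.castSucc ≠ v i.succ := by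
      intro i h
      have h2 : ((i.castSucc : Fin (l+1)) : ℕ) = ((i.succ : Fin (l+1)) : ℕ) :=
        congrArg Fin.val (hvinj h)
      simp only [Fin.coe_castSucc, Fin.val_succ] at h2
      omega
    set g : Fin l → {e : Sym2 (Fin n) // ¬ e.IsDiag} :=
      fun i => ⟨s(v i.castSucc, v i.succ), by rw [Sym2.mk_isDiag_iff]; exact hne i⟩ with hg
    have hginj : Function.Injective g := by
      intro i k hik
      have h := congrArg Subtype.val hik
      simp only [hg] at h
      rw [Sym2.eq_iff] at h
      have hval : ((i : Fin l) : ℕ) = (k : ℕ) := by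
        rcases h with ⟨h1, -⟩ | ⟨h1, h2⟩
        · have := congrArg Fin.val (hvinj h1)
          simpa using this
        · have e1 := congrArg Fin.val (hvinj h1)
          have e2 := congrArg Fin.val (hvinj h2)
          simp only [Fin.coe_castSucc, Fin.val_succ] at e1 e2
          omega
      exact Fin.ext hval
    have hset : E v = ⋂ e ∈ Finset.image g Finset.univ,
        (fun e : {e : Sym2 (Fin n) // ¬ e.IsDiag} => X e.1) e ⁻¹' {true} := by
      ext ω
      simp only [hE, Set.mem_iInter, Set.mem_setOf_eq, Finset.mem_image, Finset.mem_univ,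
        true_and, Set.mem_preimage, Set.mem_singleton_iff]
      constructor
      · rintro h e ⟨i, rfl⟩
        exact h i
      · intro h i
        exact h (g i) ⟨i, rfl⟩
    rw [hset, hindep.measure_inter_preimage_eq_mul (Finset.image g Finset.univ)
      (sets := fun _ => {true}) (fun _ _ => trivial),
      Finset.prod_image (fun i _ k _ h => hginj h)]
    calc ∏ i : Fin l, μ ((fun e : {e : Sym2 (Fin n) // ¬ e.IsDiag} => X e.1) (g i) ⁻¹' {true})
        ≤ ∏ i : Fin l, ENNReal.ofReal (c (v i.castSucc) (v i.succ)) := by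
          refine Finset.prod_le_prod' (fun i _ => ?_)
          have : (fun e : {e : Sym2 (Fin n) // ¬ e.IsDiag} => X e.1) (g i) ⁻¹' {true}
              = {ω | X s(v i.castSucc, v i.succ) ω = true} := by
            ext ω; simp [hg]
          rw [this]
          exact hq _ _ (hne i)
      _ = ENNReal.ofReal (∏ i : Fin l, c (v i.castSucc) (v i.succ)) :=
          (ENNReal.ofReal_prod_of_nonneg (fun i _ => hcnn _ _)).symm
  -- Step 3: the real sum bound
  have hreal : (∑ v ∈ Vinj, ∏ i : Fin l, c (v i.castSucc) (v i.succ))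
      ≤ β * (∑ a ∈ A, w a) * (w j / ∑ k, w k) *
          (β * ((∑ k, (w k) ^ 2) / ∑ k, w k)) ^ (l - 1) := by
    set Vfull : Finset (Fin (l+1) → Fin n) :=
      Finset.univ.filter (fun v => v 0 ∈ A ∧ v (Fin.last l) = j) with hVfull
    have h1 : (∑ v ∈ Vinj, ∏ i : Fin l, c (v i.castSucc) (v i.succ))
        ≤ ∑ v ∈ Vfull, ∏ i : Fin l, c (v i.castSucc) (v i.succ) := by
      refine Finset.sum_le_sum_of_subset_of_nonneg ?_
        (fun v _ _ => Finset.prod_nonneg (fun i _ => hcnn _ _))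
      intro v hv
      simp only [hVinj, Finset.mem_filter, Finset.mem_univ, true_and] at hv
      simp only [hVfull, Finset.mem_filter, Finset.mem_univ, true_and]
      exact hv.1
    have h2 : (∑ v ∈ Vfull, ∏ i : Fin l, c (v i.castSucc) (v i.succ))
        = ∑ a ∈ A, gsum c l a j := by
      rw [← Finset.sum_fiberwise_of_maps_to (g := fun v => v 0) (t := A)
        (fun v hv => by
          simp only [hVfull, Finset.mem_filter, Finset.mem_univ, true_and] at hv
          exact hv.1)]
      refine Finset.sum_congr rfl (fun a haA => ?_)
      refine Finset.sum_congr ?_ (fun _ _ => rfl)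
      ext v
      simp only [hVfull, VF, Finset.mem_filter, Finset.mem_univ, true_and]
      constructor
      · rintro ⟨⟨-, h2⟩, h3⟩; exact ⟨h3, h2⟩
      · rintro ⟨h1', h2⟩; exact ⟨⟨h1' ▸ haA, h2⟩, h1'⟩
    have h3 : (∑ a ∈ A, gsum c l a j)
        = β * (∑ a ∈ A, w a) * (w j / ∑ k, w k) *
            (β * ((∑ k, (w k) ^ 2) / ∑ k, w k)) ^ (l - 1) := by
      have := gsum_closed w β hL.ne' l hl
      calc ∑ a ∈ A, gsum c l a j
          = ∑ a ∈ A, w a * (β * (w j / ∑ k, w k) *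
              (β * ((∑ k, (w k) ^ 2) / ∑ k, w k)) ^ (l - 1)) := by
            refine Finset.sum_congr rfl (fun a _ => ?_)
            rw [hc, this a j]
            ring
        _ = _ := by rw [← Finset.sum_mul]; ring
    calc (∑ v ∈ Vinj, ∏ i : Fin l, c (v i.castSucc) (v i.succ))
        ≤ ∑ v ∈ Vfull, ∏ i : Fin l, c (v i.castSucc) (v i.succ) := h1
      _ = ∑ a ∈ A, gsum c l a j := h2
      _ = _ := h3
  -- Assemble
  calc μ {ω | (⨅ a ∈ A, (graphOfConfig (fun e => X e ω)).edist a j) = (l : ℕ∞)}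
      ≤ μ (⋃ v ∈ Vinj, E v) := measure_mono hsub
    _ ≤ ∑ v ∈ Vinj, μ (E v) := measure_biUnion_finset_le _ _
    _ ≤ ∑ v ∈ Vinj, ENNReal.ofReal (∏ i : Fin l, c (v i.castSucc) (v i.succ)) :=
        Finset.sum_le_sum hEv
    _ = ENNReal.ofReal (∑ v ∈ Vinj, ∏ i : Fin l, c (v i.castSucc) (v i.succ)) :=
        (ENNReal.ofReal_sum_of_nonneg
          (fun v _ => Finset.prod_nonneg (fun i _ => hcnn _ _))).symm
    _ ≤ _ := ENNReal.ofReal_le_ofReal hreal
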